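/- Fix n > 1, let r ≤ n, and let i₁ < i₂ < ⋯ < i_r be integers with 1 ≤ i₁ and i_r ≤ n. Then the subspace span(φ_{i₁}(V(n)) ∪ ⋯ ∪ φ_{i_r}(V(n))) of W(n) has dimension r·C(n,2) − C(r,3). -/

import Mathlib

open Submodule

/-- Index type for the distinguished basis of `V(n)`: pairs `(j,i)` with `i < j`. -/
abbrev VIdx (n : ℕ) := {q : Fin n × Fin n // q.2 < q.1}

/-- Index type for the distinguished basis of `W(n)`: triples `(j,i,k)` with `i < j`, `i ≤ k`. -/
abbrev WIdx (n : ℕ) := {t : Fin n × Fin n × Fin n // t.2.1 < t.1 ∧ t.2.1 ≤ t.2.2}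

/-- The vector space `V(n)` over `F`. -/
abbrev V (F : Type*) [Field F] (n : ℕ) := VIdx n → F

/-- The vector space `W(n)` over `F`. -/
abbrev W (F : Type*) [Field F] (n : ℕ) := WIdx n → F

variable (F : Type*) [Field F] (n : ℕ)

/-- The vector `v[j,i]`, with the conventions `v[i,j] = -v[j,i]` and `v[i,i] = 0`. -/
noncomputable def v (j i : Fin n) : V F n :=
  if h : i < j then Pi.single (⟨(j, i), h⟩ : VIdx n) 1
  else if h' : j < i then -Pi.single (⟨(i, j), h'⟩ : VIdx n) 1
  else 0

/-- The vector `w[j,i,k]` (the basis vector when `i < j` and `i ≤ k`, zero otherwise). -/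
noncomputable def w (j i k : Fin n) : W F n :=
  if h : i < j ∧ i ≤ k then Pi.single (⟨(j, i, k), h⟩ : WIdx n) 1 else 0

/-- The linear map `φ_k : V(n) → W(n)` determined on basis vectors by
`φ_k(v[j,i]) = w[j,i,k]` if `i ≤ k`, and `φ_k(v[j,i]) = w[j,k,i] - w[i,k,j]` if `k < i`. -/
noncomputable def phi (k : Fin n) : V F n →ₗ[F] W F n :=
  (Pi.basisFun F (VIdx n)).constr F fun q =>
    if q.1.2 ≤ k then w F n q.1.1 q.1.2 k
    else w F n q.1.1 k q.1.2 - w F n q.1.2 k q.1.1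

/-- The linear map `Φ_n : V(n)ⁿ → W(n)`, `Φ_n(x₁,…,x_n) = φ₁(x₁) + ⋯ + φ_n(x_n)`. -/
noncomputable def Phi : (Fin n → V F n) →ₗ[F] W F n :=
  ∑ k : Fin n, (phi F n k).comp (LinearMap.proj k)

/-- For `X ≤ V(n)`, the subspace `X* ≤ W(n)`: the span of `φ₁(X) ∪ ⋯ ∪ φ_n(X)`. -/
noncomputable def starV (X : Submodule F (V F n)) : Submodule F (W F n) :=
  ⨆ k : Fin n, X.map (phi F n k)

/-- For `Y ≤ W(n)`, the subspace `Y* ≤ V(n)`: the intersection `⋂ₖ φ_k⁻¹(Y)`. -/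
noncomputable def starW (Y : Submodule F (W F n)) : Submodule F (V F n) :=
  ⨅ k : Fin n, Y.comap (phi F n k)

section Statement4Aux
variable {n : ℕ}

def goodT (S : Finset (Fin n)) (t : Fin n × Fin n × Fin n) : Prop :=
  t.2.2 ∈ S ∨ (t.2.1 ∈ S ∧ t.1 ∈ S) ∨ (t.2.1 ∈ S ∧ t.1 ∉ S ∧ t.2.2 ∉ S ∧ t.2.2 < t.1)

instance (S : Finset (Fin n)) : DecidablePred (goodT S) := fun t => by
  unfold goodT; infer_instance

abbrev Bidx (S : Finset (Fin n)) := {x : WIdx n // goodT S x.1}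

variable (F : Type*) [Field F]

noncomputable def gen (k : Fin n) (q : VIdx n) : W F n :=
  if q.1.2 ≤ k then w F n q.1.1 q.1.2 k
  else w F n q.1.1 k q.1.2 - w F n q.1.2 k q.1.1

lemma phi_eq_constr_gen (k : Fin n) :
    phi F n k = (Pi.basisFun F (VIdx n)).constr F (gen F k) := rfl

lemma range_phi (k : Fin n) :
    LinearMap.range (phi F n k) = span F (Set.range (gen F k)) := by
  rw [phi_eq_constr_gen]; exact Module.Basis.constr_range _ _

lemma phi_single (k : Fin n) (q : VIdx n) :
    phi F n k (Pi.single q 1) = gen F k q := by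
  rw [phi_eq_constr_gen, ← Pi.basisFun_apply, Module.Basis.constr_basis]

lemma w_eq (j i k : Fin n) (h : i < j ∧ i ≤ k) :
    w F n j i k = Pi.single (⟨(j, i, k), h⟩ : WIdx n) 1 := dif_pos h

noncomputable def bvec (S : Finset (Fin n)) (x : Bidx S) : W F n :=
  if x.1.1.2.2 ∈ S ∨ x.1.1.1 ∈ S then w F n x.1.1.1 x.1.1.2.1 x.1.1.2.2
  else w F n x.1.1.1 x.1.1.2.1 x.1.1.2.2 - w F n x.1.1.2.2 x.1.1.2.1 x.1.1.1

end Statement4Aux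

section Indep
variable {n : ℕ} (F : Type*) [Field F]

lemma bvec_apply_coord (S : Finset (Fin n)) (x y : Bidx S) :
    bvec F S x y.1 = if y = x then 1 else 0 := by
  obtain ⟨⟨⟨j, i, k⟩, hv⟩, hg⟩ := x
  have key : ∀ (h : _), (Pi.single (⟨(j, i, k), h⟩ : WIdx n) 1 : W F n) y.1
      = if y = ⟨⟨(j, i, k), h⟩, hg⟩ then 1 else 0 := by
    intro h
    rw [Pi.single_apply]
    congr 1
    simp [Subtype.ext_iff]
  have hb : bvec F S ⟨⟨(j, i, k), hv⟩, hg⟩ =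
      if k ∈ S ∨ j ∈ S then w F n j i k else w F n j i k - w F n k i j := rfl
  rw [hb]
  by_cases hc : k ∈ S ∨ j ∈ S
  · rw [if_pos hc, w_eq F j i k hv]; exact key hv
  · rw [if_neg hc]
    push_neg at hc
    obtain ⟨hkS, hjS⟩ := hc
    have hg' : goodT S (j, i, k) := hg
    have h3 : i ∈ S ∧ j ∉ S ∧ k ∉ S ∧ k < j := by
      rcases hg' with h | h | h
      · exact absurd h hkS
      · exact absurd h.2 hjS
      · exact h
    have hik : i < k := lt_of_le_of_ne hv.2 fun h => hkS (h ▸ h3.1)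
    have hpart : (i < k ∧ i ≤ j) := ⟨hik, hv.1.le⟩
    rw [w_eq F j i k hv, w_eq F k i j hpart]
    have hzero : (Pi.single (⟨(k, i, j), hpart⟩ : WIdx n) 1 : W F n) y.1 = 0 := by
      rw [Pi.single_apply, if_neg]
      intro hEq
      have hval : (y.1 : Fin n × Fin n × Fin n) = (k, i, j) := congrArg Subtype.val hEq
      have hgy : goodT S (k, i, j) := hval ▸ y.2
      rcases hgy with h | h | h
      · exact hjS h
      · exact hkS h.2
      · exact absurd h3.2.2.2 (not_lt.2 h.2.2.2.le)
    rw [Pi.sub_apply, hzero, sub_zero]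
    exact key hv

lemma bvec_indep (S : Finset (Fin n)) : LinearIndependent F (bvec F S) := by
  apply LinearIndependent.of_comp (LinearMap.funLeft F F (Subtype.val : Bidx S → WIdx n))
  have heq : (⇑(LinearMap.funLeft F F (Subtype.val : Bidx S → WIdx n)) ∘ (bvec F S))
      = fun x => Pi.single x 1 := by
    funext x y
    simp only [Function.comp_apply, LinearMap.funLeft_apply]
    rw [bvec_apply_coord, Pi.single_apply]
  rw [heq]
  have := (Pi.basisFun F (Bidx S)).linearIndependent
  rwa [show ⇑(Pi.basisFun F (Bidx S)) = fun x => Pi.single x 1 from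
    funext fun x => Pi.basisFun_apply F (Bidx S) x] at this

end Indep

section Span
variable {n r : ℕ} (F : Type*) [Field F]

lemma gen_pos (k j i : Fin n) (h : i < j) (hik : i ≤ k) :
    gen F k ⟨(j, i), h⟩ = w F n j i k := if_pos hik

lemma gen_neg (k j i : Fin n) (h : i < j) (hik : ¬ i ≤ k) :
    gen F k ⟨(j, i), h⟩ = w F n j k i - w F n i k j := if_neg hik

lemma span_bvec_eq (ι : Fin r → Fin n) :
    span F (Set.range (bvec F (Finset.image ι Finset.univ))) =
      ⨆ t : Fin r, LinearMap.range (phi F n (ι t)) := by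
  set S := Finset.image ι Finset.univ with hSdef
  have hmem : ∀ k : Fin n, k ∈ S ↔ ∃ t, ι t = k := by
    intro k; simp [hSdef]
  have gen_mem : ∀ (t : Fin r) (q : VIdx n),
      gen F (ι t) q ∈ ⨆ s : Fin r, LinearMap.range (phi F n (ι s)) := fun t q =>
    mem_iSup_of_mem t ⟨Pi.single q 1, phi_single F (ι t) q⟩
  apply le_antisymm
  · rw [span_le]
    rintro _ ⟨x, rfl⟩
    obtain ⟨⟨⟨j, i, k⟩, hv⟩, hg⟩ := x
    obtain ⟨hij, hik⟩ := hv
    have hb : bvec F S ⟨⟨(j, i, k), ⟨hij, hik⟩⟩, hg⟩ =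
        if k ∈ S ∨ j ∈ S then w F n j i k else w F n j i k - w F n k i j := rfl
    rw [hb]
    have hg' : goodT S (j, i, k) := hg
    by_cases hkS : k ∈ S
    · rw [if_pos (Or.inl hkS)]
      obtain ⟨t, rfl⟩ := (hmem k).1 hkS
      exact gen_pos F _ j i hij hik ▸ gen_mem t _
    · have hiS : i ∈ S := by
        rcases hg' with h | h | h
        · exact absurd h hkS
        · exact h.1
        · exact h.1
      have hikk : i < k := lt_of_le_of_ne hik fun h => hkS (h ▸ hiS)
      obtain ⟨ti, hti⟩ := (hmem i).1 hiS
      by_cases hjS : j ∈ S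
      · rw [if_pos (Or.inr hjS)]
        obtain ⟨tj, htj⟩ := (hmem j).1 hjS
        rcases lt_trichotomy k j with hkj | hkj | hkj
        · have e1 : gen F (ι ti) ⟨(j, k), hkj⟩ = w F n j i k - w F n k i j := by
            rw [gen_neg F _ j k hkj (by rw [hti]; exact not_le.2 hikk), hti]
          have e2 : gen F (ι tj) ⟨(k, i), hikk⟩ = w F n k i j := by
            rw [gen_pos F _ k i hikk (by rw [htj]; exact hij.le), htj]
          have : w F n j i k = gen F (ι ti) ⟨(j, k), hkj⟩ + gen F (ι tj) ⟨(k, i), hikk⟩ := by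
            rw [e1, e2]; ring
          rw [this]
          exact add_mem (gen_mem ti _) (gen_mem tj _)
        · exact absurd (hkj ▸ hjS) hkS
        · have e1 : gen F (ι tj) ⟨(k, i), hikk⟩ = w F n k i j := by
            rw [gen_pos F _ k i hikk (by rw [htj]; exact hij.le), htj]
          have e2 : gen F (ι ti) ⟨(k, j), hkj⟩ = w F n k i j - w F n j i k := by
            rw [gen_neg F _ k j hkj (by rw [hti]; exact not_le.2 hij), hti]
          have : w F n j i k = gen F (ι tj) ⟨(k, i), hikk⟩ - gen F (ι ti) ⟨(k, j), hkj⟩ := by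
            rw [e1, e2]; ring
          rw [this]
          exact sub_mem (gen_mem tj _) (gen_mem ti _)
      · rw [if_neg (by rintro (h | h); exacts [hkS h, hjS h])]
        have h3 : i ∈ S ∧ j ∉ S ∧ k ∉ S ∧ k < j := by
          rcases hg' with h | h | h
          · exact absurd h hkS
          · exact absurd h.2 hjS
          · exact h
        have e1 : gen F (ι ti) ⟨(j, k), h3.2.2.2⟩ = w F n j i k - w F n k i j := by
          rw [gen_neg F _ j k h3.2.2.2 (by rw [hti]; exact not_le.2 hikk), hti]
        exact e1 ▸ gen_mem ti _
  · refine iSup_le fun t => ?_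
    rw [range_phi, span_le]
    rintro _ ⟨q, rfl⟩
    obtain ⟨⟨j, i⟩, hij⟩ := q
    have hkS : ι t ∈ S := (hmem (ι t)).2 ⟨t, rfl⟩
    set k := ι t with hk
    by_cases hik : i ≤ k
    · rw [gen_pos F k j i hij hik]
      have hx : bvec F S ⟨⟨(j, i, k), ⟨hij, hik⟩⟩, Or.inl hkS⟩ = w F n j i k := if_pos (Or.inl hkS)
      exact hx ▸ subset_span (Set.mem_range_self _)
    · push_neg at hik
      rw [gen_neg F k j i hij (not_le.2 hik)]
      have hkj : k < j := hik.trans hij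
      by_cases hiS : i ∈ S
      · -- x1 = (j,k,i) good via third coord i ∈ S; x2 = (i,k,j) good
        have hg1 : goodT S (j, k, i) := Or.inl hiS
        have hg2 : goodT S (i, k, j) := by
          by_cases hjS : j ∈ S
          · exact Or.inl hjS
          · exact Or.inr (Or.inl ⟨hkS, hiS⟩)
        have hx1 : bvec F S ⟨⟨(j, k, i), ⟨hkj, hik.le⟩⟩, hg1⟩ = w F n j k i :=
          if_pos (Or.inl hiS)
        have hx2 : bvec F S ⟨⟨(i, k, j), ⟨hik, hkj.le⟩⟩, hg2⟩ = w F n i k j := by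
          by_cases hjS : j ∈ S
          · exact if_pos (Or.inl hjS)
          · exact if_pos (Or.inr hiS)
        exact hx1 ▸ hx2 ▸ sub_mem (subset_span (Set.mem_range_self _))
            (subset_span (Set.mem_range_self _))
      · by_cases hjS : j ∈ S
        · have hg1 : goodT S (j, k, i) := Or.inr (Or.inl ⟨hkS, hjS⟩)
          have hg2 : goodT S (i, k, j) := Or.inl hjS
          have hx1 : bvec F S ⟨⟨(j, k, i), ⟨hkj, hik.le⟩⟩, hg1⟩ = w F n j k i :=
            if_pos (Or.inr hjS)
          have hx2 : bvec F S ⟨⟨(i, k, j), ⟨hik, hkj.le⟩⟩, hg2⟩ = w F n i k j :=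
            if_pos (Or.inl hjS)
          exact hx1 ▸ hx2 ▸ sub_mem (subset_span (Set.mem_range_self _))
              (subset_span (Set.mem_range_self _))
        · have hg1 : goodT S (j, k, i) := Or.inr (Or.inr ⟨hkS, hjS, hiS, hij⟩)
          have hx1 : bvec F S ⟨⟨(j, k, i), ⟨hkj, hik.le⟩⟩, hg1⟩ = w F n j k i - w F n i k j :=
            if_neg (by rintro (h | h); exacts [hiS h, hjS h])
          exact hx1 ▸ subset_span (Set.mem_range_self _)

end Span

section Counting
open Finset

lemma sum_mul_aux : ∀ r : ℕ, ∑ m ∈ range r, m * (r - 1 - m) = r.choose 3 := by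
  intro r
  induction r with
  | zero => simp
  | succ r ih =>
    rw [Finset.sum_range_succ]
    have hterm : r * (r + 1 - 1 - r) = 0 := by simp
    have hcongr : ∀ m ∈ range r, m * (r + 1 - 1 - m) = m * (r - 1 - m) + m := by
      intro m hm
      rw [mem_range] at hm
      have : r + 1 - 1 - m = (r - 1 - m) + 1 := by omega
      rw [this, Nat.mul_succ]
    rw [Finset.sum_congr rfl hcongr, Finset.sum_add_distrib, ih, hterm,
      Finset.sum_range_id, ← Nat.choose_two_right]
    have h3 : (r + 1).choose 3 = r.choose 2 + r.choose 3 := Nat.choose_succ_succ r 2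
    omega

lemma card_Iio_fin {m : ℕ} (b : Fin m) :
    (univ.filter fun a : Fin m => a < b).card = (b : ℕ) := by
  have : (univ.filter fun a : Fin m => a < b) = Finset.Iio b := by ext a; simp
  rw [this, Fin.card_Iio]

lemma card_Ioi_fin {m : ℕ} (b : Fin m) :
    (univ.filter fun a : Fin m => b < a).card = m - 1 - (b : ℕ) := by
  have : (univ.filter fun a : Fin m => b < a) = Finset.Ioi b := by ext a; simp
  rw [this, Fin.card_Ioi]

lemma card_pairs (m : ℕ) :
    (univ.filter fun q : Fin m × Fin m => q.2 < q.1).card = m.choose 2 := by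
  rw [Finset.card_filter, Fintype.sum_prod_type]
  have h1 : ∀ a : Fin m, (∑ b : Fin m, if (a, b).2 < (a, b).1 then 1 else 0) = (a : ℕ) := by
    intro a
    rw [← Finset.card_filter]
    exact card_Iio_fin a
  rw [Finset.sum_congr rfl fun a _ => h1 a, Fin.sum_univ_eq_sum_range (fun i => i) m,
    Finset.sum_range_id, Nat.choose_two_right]

lemma card_triples (m : ℕ) :
    (univ.filter fun t : Fin m × Fin m × Fin m => t.1 < t.2.1 ∧ t.2.1 < t.2.2).card
      = m.choose 3 := by
  rw [Finset.card_filter, Fintype.sum_prod_type]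
  have h1 : ∀ a : Fin m,
      (∑ p : Fin m × Fin m, if a < p.1 ∧ p.1 < p.2 then 1 else 0)
        = ∑ b : Fin m, if a < b then (m - 1 - (b : ℕ)) else 0 := by
    intro a
    rw [Fintype.sum_prod_type]
    refine Finset.sum_congr rfl fun b _ => ?_
    by_cases hab : a < b
    · simp only [hab, true_and, if_pos hab]
      rw [← Finset.card_filter]
      exact card_Ioi_fin b
    · simp [hab]
  calc (∑ a : Fin m, ∑ p : Fin m × Fin m, if a < p.1 ∧ p.1 < p.2 then 1 else 0)
      = ∑ a : Fin m, ∑ b : Fin m, if a < b then (m - 1 - (b : ℕ)) else 0 :=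
        Finset.sum_congr rfl fun a _ => h1 a
    _ = ∑ b : Fin m, ∑ a : Fin m, if a < b then (m - 1 - (b : ℕ)) else 0 := Finset.sum_comm
    _ = ∑ b : Fin m, (b : ℕ) * (m - 1 - (b : ℕ)) := by
        refine Finset.sum_congr rfl fun b _ => ?_
        rw [← Finset.sum_filter, Finset.sum_const, smul_eq_mul, card_Iio_fin]
    _ = ∑ b ∈ range m, b * (m - 1 - b) := Fin.sum_univ_eq_sum_range (fun b => b * (m - 1 - b)) m
    _ = m.choose 3 := sum_mul_aux m

end Counting

section MainCount
open Finset
variable {n r : ℕ}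

def gmap (S : Finset (Fin n)) (t : Fin n × Fin n × Fin n) : Fin n × (Fin n × Fin n) :=
  if t.1 < t.2.1 then (t.1, (t.2.2, t.2.1))
  else if t.2.2 ∈ S then (t.2.2, (t.1, t.2.1))
  else (t.2.1, if t.2.2 < t.1 then (t.1, t.2.2) else (t.2.2, t.1))

def hmap (S : Finset (Fin n)) (b : Fin n × (Fin n × Fin n)) : Fin n × Fin n × Fin n :=
  if b.2.2 ≤ b.1 then (b.2.1, b.2.2, b.1)
  else if b.2.2 ∈ S then (if b.2.1 ∈ S then (b.1, b.2.2, b.2.1) else (b.2.2, b.1, b.2.1))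
  else (b.2.1, b.1, b.2.2)

lemma card_main (ι : Fin r → Fin n) (hι : StrictMono ι) :
    (univ.filter fun t : Fin n × Fin n × Fin n =>
        (t.2.1 < t.1 ∧ t.2.1 ≤ t.2.2) ∧ goodT (Finset.image ι Finset.univ) t).card
      + r.choose 3 = r * n.choose 2 := by
  classical
  set S := Finset.image ι Finset.univ with hSdef
  have hmem : ∀ k : Fin n, k ∈ S ↔ ∃ t, ι t = k := by intro k; simp [hSdef]
  set A := univ.filter fun t : Fin n × Fin n × Fin n =>
    (t.2.1 < t.1 ∧ t.2.1 ≤ t.2.2) ∧ goodT S t with hAdef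
  set Tr := univ.filter fun t : Fin n × Fin n × Fin n =>
    t.1 < t.2.1 ∧ t.2.1 < t.2.2 ∧ t.1 ∈ S ∧ t.2.1 ∈ S ∧ t.2.2 ∈ S with hTdef
  -- card of Tr
  have hTr : Tr.card = r.choose 3 := by
    rw [← card_triples r]
    symm
    apply Finset.card_bij (fun (a : Fin r × Fin r × Fin r) _ => (ι a.1, ι a.2.1, ι a.2.2))
    · intro a ha
      rw [mem_filter] at ha
      rw [hTdef, mem_filter]
      refine ⟨mem_univ _, hι ha.2.1, hι ha.2.2, ?_, ?_, ?_⟩ <;>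
        · rw [hmem]; exact ⟨_, rfl⟩
    · intro a _ b _ hab
      have h1 : ι a.1 = ι b.1 := congrArg Prod.fst hab
      have h2 : ι a.2.1 = ι b.2.1 := congrArg (fun x => x.2.1) hab
      have h3 : ι a.2.2 = ι b.2.2 := congrArg (fun x => x.2.2) hab
      obtain ⟨a1, a2, a3⟩ := a
      obtain ⟨b1, b2, b3⟩ := b
      simp only at h1 h2 h3
      simp [hι.injective h1, hι.injective h2, hι.injective h3]
    · intro b hb
      rw [hTdef, mem_filter] at hb
      obtain ⟨-, h12, h23, hb1, hb2, hb3⟩ := hb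
      obtain ⟨t1, ht1⟩ := (hmem _).1 hb1
      obtain ⟨t2, ht2⟩ := (hmem _).1 hb2
      obtain ⟨t3, ht3⟩ := (hmem _).1 hb3
      refine ⟨(t1, t2, t3), ?_, ?_⟩
      · rw [mem_filter]
        refine ⟨mem_univ _, ?_, ?_⟩
        · rw [← hι.lt_iff_lt, ht1, ht2]; exact h12
        · rw [← hι.lt_iff_lt, ht2, ht3]; exact h23
      · simp [ht1, ht2, ht3]
  have hdisj : Disjoint A Tr := by
    rw [Finset.disjoint_left]
    intro t htA htT
    rw [hAdef, mem_filter] at htA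
    rw [hTdef, mem_filter] at htT
    exact lt_asymm htA.2.1.1 htT.2.1
  have hbij : (A ∪ Tr).card
      = (S ×ˢ (univ.filter fun q : Fin n × Fin n => q.2 < q.1)).card := by
    apply Finset.card_nbij' (gmap S) (hmap S)
    · -- gmap maps into product
      rintro ⟨j, i, k⟩ ha
      rcases mem_union.1 ha with hA | hT
      · rw [hAdef, mem_filter] at hA
        obtain ⟨-, ⟨hij, hik⟩, hg⟩ := hA
        simp only [gmap]
        rw [if_neg (not_lt.2 hij.le)]
        by_cases hkS : k ∈ S
        · rw [if_pos hkS]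
          simp [Finset.mem_product, hkS, hij]
        · rw [if_neg hkS]
          have hiS : i ∈ S := by
            rcases hg with h | h | h
            · exact absurd h hkS
            · exact h.1
            · exact h.1
          have hikk : i < k := lt_of_le_of_ne hik fun h => hkS (h ▸ hiS)
          by_cases hkj : k < j
          · rw [if_pos hkj]
            simp [Finset.mem_product, hiS, hkj]
          · rw [if_neg hkj]
            have hjS : j ∈ S := by
              rcases hg with h | h | h
              · exact absurd h hkS
              · exact h.2
              · exact absurd h.2.2.2 hkj
            have hjk : j < k := lt_of_le_of_ne (not_lt.1 hkj) fun h => hkS (h ▸ hjS)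
            simp [Finset.mem_product, hiS, hjk]
      · rw [hTdef, mem_filter] at hT
        obtain ⟨-, hji, hik, hjS, hiS, hkS⟩ := hT
        simp only [gmap]
        rw [if_pos hji]
        simp [Finset.mem_product, hjS, hik]
    · -- hmap maps into union
      rintro ⟨s, j, i⟩ hb
      rw [Finset.mem_coe, Finset.mem_product, mem_filter] at hb
      rw [Finset.mem_coe]
      obtain ⟨hsS, -, hij⟩ := hb
      simp only [hmap]
      by_cases his : i ≤ s
      · rw [if_pos his]
        apply mem_union_left
        rw [hAdef, mem_filter]
        exact ⟨mem_univ _, ⟨hij, his⟩, Or.inl hsS⟩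
      · rw [if_neg his]
        have hsi : s < i := not_le.1 his
        by_cases hiS : i ∈ S
        · rw [if_pos hiS]
          by_cases hjS : j ∈ S
          · rw [if_pos hjS]
            apply mem_union_right
            rw [hTdef, mem_filter]
            exact ⟨mem_univ _, hsi, hij, hsS, hiS, hjS⟩
          · rw [if_neg hjS]
            apply mem_union_left
            rw [hAdef, mem_filter]
            exact ⟨mem_univ _, ⟨hsi, (hsi.trans hij).le⟩, Or.inr (Or.inl ⟨hsS, hiS⟩)⟩
        · rw [if_neg hiS]
          apply mem_union_left
          rw [hAdef, mem_filter]
          refine ⟨mem_univ _, ⟨hsi.trans hij, hsi.le⟩, ?_⟩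
          by_cases hjS : j ∈ S
          · exact Or.inr (Or.inl ⟨hsS, hjS⟩)
          · exact Or.inr (Or.inr ⟨hsS, hjS, hiS, hij⟩)
    · -- left inverse
      rintro ⟨j, i, k⟩ ha
      rcases mem_union.1 ha with hA | hT
      · rw [hAdef, mem_filter] at hA
        obtain ⟨-, ⟨hij, hik⟩, hg⟩ := hA
        simp only [gmap]
        rw [if_neg (not_lt.2 hij.le)]
        by_cases hkS : k ∈ S
        · rw [if_pos hkS]
          simp only [hmap]
          rw [if_pos hik]
        · rw [if_neg hkS]
          have hiS : i ∈ S := by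
            rcases hg with h | h | h
            · exact absurd h hkS
            · exact h.1
            · exact h.1
          have hikk : i < k := lt_of_le_of_ne hik fun h => hkS (h ▸ hiS)
          by_cases hkj : k < j
          · rw [if_pos hkj]
            simp only [hmap]
            rw [if_neg (not_le.2 hikk), if_neg hkS]
          · rw [if_neg hkj]
            have hjS : j ∈ S := by
              rcases hg with h | h | h
              · exact absurd h hkS
              · exact h.2
              · exact absurd h.2.2.2 hkj
            simp only [hmap]
            rw [if_neg (not_le.2 hij), if_pos hjS, if_neg hkS]
      · rw [hTdef, mem_filter] at hT
        obtain ⟨-, hji, hik, hjS, hiS, hkS⟩ := hT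
        simp only [gmap]
        rw [if_pos hji]
        simp only [hmap]
        rw [if_neg (not_le.2 hji), if_pos hiS, if_pos hkS]
    · -- right inverse
      rintro ⟨s, j, i⟩ hb
      rw [Finset.mem_coe, Finset.mem_product, mem_filter] at hb
      obtain ⟨hsS, -, hij⟩ := hb
      simp only [hmap]
      by_cases his : i ≤ s
      · rw [if_pos his]
        simp only [gmap]
        rw [if_neg (not_lt.2 hij.le), if_pos hsS]
      · rw [if_neg his]
        have hsi : s < i := not_le.1 his
        by_cases hiS : i ∈ S
        · rw [if_pos hiS]
          by_cases hjS : j ∈ S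
          · rw [if_pos hjS]
            simp only [gmap]
            rw [if_pos hsi]
          · rw [if_neg hjS]
            simp only [gmap]
            rw [if_neg (not_lt.2 hsi.le), if_neg hjS, if_neg (not_lt.2 hij.le)]
        · rw [if_neg hiS]
          simp only [gmap]
          rw [if_neg (not_lt.2 (hsi.trans hij).le), if_neg hiS, if_pos hij]
  have hprod : (S ×ˢ (univ.filter fun q : Fin n × Fin n => q.2 < q.1)).card
      = r * n.choose 2 := by
    rw [Finset.card_product, card_pairs]
    congr 1
    rw [hSdef, Finset.card_image_of_injective _ hι.injective, card_univ, Fintype.card_fin]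
  rw [← hTr, ← card_union_of_disjoint hdisj, hbij, hprod]

end MainCount


/-- Let `i₁ < i₂ < ⋯ < i_r` be indices in `{1,…,n}` (given by a strictly monotone
`ι : Fin r → Fin n`).  Then `span(φ_{i₁}(V(n)) ∪ ⋯ ∪ φ_{i_r}(V(n)))` has dimension
`r·C(n,2) − C(r,3)`. -/
theorem statement4 (p : ℕ) [Fact p.Prime] (hp2 : p ≠ 2) (n : ℕ) (hn : 1 < n)
    (r : ℕ) (hr : r ≤ n) (hr1 : 1 ≤ r) (ι : Fin r → Fin n) (hι : StrictMono ι) :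
    Module.finrank (ZMod p)
        ↥(⨆ t : Fin r, LinearMap.range (phi (ZMod p) n (ι t))) =
      r * n.choose 2 - r.choose 3 := by
  classical
  set F := ZMod p
  set S := Finset.image ι Finset.univ with hSdef
  rw [← span_bvec_eq F ι]
  rw [finrank_span_eq_card (bvec_indep F S)]
  have hcard : Fintype.card (Bidx S) = (Finset.univ.filter fun t : Fin n × Fin n × Fin n =>
      (t.2.1 < t.1 ∧ t.2.1 ≤ t.2.2) ∧ goodT S t).card := by
    rw [← Fintype.card_subtype]
    exact Fintype.card_congr
      (Equiv.subtypeSubtypeEquivSubtypeInter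
        (fun t : Fin n × Fin n × Fin n => t.2.1 < t.1 ∧ t.2.1 ≤ t.2.2) (goodT S))
  rw [hcard]
  exact Nat.eq_sub_of_add_eq (card_main ι hι)
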